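/- Let n ≥ 1. For g ∈ GL(n+1, ℂ) written in blocks g = (A b; c d) with A an n×n complex matrix, b ∈ ℂⁿ a column, c a row vector of length n, and d ∈ ℂ, and for z ∈ ℂⁿ with c·z + d ≠ 0, set g·z := (c·z + d)⁻¹(A z + b), y(g,z) := (c·z + d)⁻¹ c, and define the block diagonal matrix k(g,z) := fromBlocks (A − (g·z) c) 0 0 (c·z + d) and the matrices Y(g,z) := fromBlocks 0 0 (y(g,z)) 0 and X := fromBlocks 0 x 0 0 for x ∈ ℂⁿ. Then k(g,z) is invertible, the map z ↦ k(g,z)⁻¹ is holomorphic on { z | c·z + d ≠ 0 }, and its derivative at z in the direction x equals −⁅Y(g,z), X⁆ * k(g,z)⁻¹, where ⁅·,·⁆ denotes the matrix commutator. -/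

import Mathlib

open Matrix

noncomputable section

/-- The upper-left `n × n` block `A` of an `(n+1) × (n+1)` matrix `g = (A b; c d)`. -/
def Ablk {n : ℕ} (g : Matrix (Fin n ⊕ Unit) (Fin n ⊕ Unit) ℂ) : Matrix (Fin n) (Fin n) ℂ :=
  g.toBlocks₁₁

/-- The upper-right column `b` of `g = (A b; c d)`. -/
def bcol {n : ℕ} (g : Matrix (Fin n ⊕ Unit) (Fin n ⊕ Unit) ℂ) : Fin n → ℂ :=
  fun i => g (Sum.inl i) (Sum.inr ())

/-- The lower-left row `c` of `g = (A b; c d)`. -/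
def crow {n : ℕ} (g : Matrix (Fin n ⊕ Unit) (Fin n ⊕ Unit) ℂ) : Fin n → ℂ :=
  fun j => g (Sum.inr ()) (Sum.inl j)

/-- The lower-right scalar `d` of `g = (A b; c d)`. -/
def dent {n : ℕ} (g : Matrix (Fin n ⊕ Unit) (Fin n ⊕ Unit) ℂ) : ℂ :=
  g (Sum.inr ()) (Sum.inr ())

/-- The denominator `c·z + d` of the Möbius action of `g = (A b; c d)` at `z ∈ ℂⁿ`. -/
def den {n : ℕ} (g : Matrix (Fin n ⊕ Unit) (Fin n ⊕ Unit) ℂ) (z : Fin n → ℂ) : ℂ :=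
  crow g ⬝ᵥ z + dent g

/-- The Möbius action `g·z = (c·z + d)⁻¹ (A z + b)` of `g = (A b; c d)` on `z ∈ ℂⁿ`. -/
noncomputable def mact {n : ℕ} (g : Matrix (Fin n ⊕ Unit) (Fin n ⊕ Unit) ℂ)
    (z : Fin n → ℂ) : Fin n → ℂ :=
  (den g z)⁻¹ • (Ablk g *ᵥ z + bcol g)

/-- A vector `v ∈ ℂⁿ` as an `n × 1` column matrix. -/
def colm {n : ℕ} (v : Fin n → ℂ) : Matrix (Fin n) Unit ℂ := Matrix.of fun i _ => v i

/-- A vector `v ∈ ℂⁿ` as a `1 × n` row matrix. -/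
def rowm {n : ℕ} (v : Fin n → ℂ) : Matrix Unit (Fin n) ℂ := Matrix.of fun _ j => v j

/-- A scalar `a ∈ ℂ` as a `1 × 1` matrix. -/
def sclm (a : ℂ) : Matrix Unit Unit ℂ := Matrix.of fun _ _ => a

attribute [local instance] Matrix.normedAddCommGroup Matrix.normedSpace

/-- The row vector `y(g,z) = (c·z + d)⁻¹ c`. -/
def yrow {n : ℕ} (g : Matrix (Fin n ⊕ Unit) (Fin n ⊕ Unit) ℂ) (z : Fin n → ℂ) :
    Fin n → ℂ :=
  (den g z)⁻¹ • crow g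

/-- The strictly lower triangular matrix `Y(g,z) = (0 0; y(g,z) 0)`. -/
def Ymat {n : ℕ} (g : Matrix (Fin n ⊕ Unit) (Fin n ⊕ Unit) ℂ) (z : Fin n → ℂ) :
    Matrix (Fin n ⊕ Unit) (Fin n ⊕ Unit) ℂ :=
  fromBlocks 0 0 (rowm (yrow g z)) 0

/-- The strictly upper triangular matrix `X = (0 x; 0 0)` for `x ∈ ℂⁿ`. -/
def Xmat {n : ℕ} (x : Fin n → ℂ) : Matrix (Fin n ⊕ Unit) (Fin n ⊕ Unit) ℂ :=
  fromBlocks 0 (colm x) 0 0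

/-- The block diagonal automorphy factor `k(g,z) = (A - (g·z)c  0; 0  c·z+d)`. -/
def kmat {n : ℕ} (g : Matrix (Fin n ⊕ Unit) (Fin n ⊕ Unit) ℂ) (z : Fin n → ℂ) :
    Matrix (Fin n ⊕ Unit) (Fin n ⊕ Unit) ℂ :=
  fromBlocks (Ablk g - vecMulVec (mact g z) (crow g)) 0 0 (sclm (den g z))


/-! ### Auxiliary lemmas -/

section Aux

variable {n : ℕ} {G G' : Matrix (Fin n ⊕ Unit) (Fin n ⊕ Unit) ℂ} {z : Fin n → ℂ}

theorem mul_vecMulVec' (A : Matrix (Fin n) (Fin n) ℂ) (u v : Fin n → ℂ) :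
    A * vecMulVec u v = vecMulVec (A *ᵥ u) v := by
  ext i j; simp [mul_apply, vecMulVec_apply, mulVec, dotProduct, Finset.sum_mul, mul_assoc]

theorem vecMulVec_mul' (u v : Fin n → ℂ) (A : Matrix (Fin n) (Fin n) ℂ) :
    vecMulVec u v * A = vecMulVec u (v ᵥ* A) := by
  ext i j; simp [mul_apply, vecMulVec_apply, vecMul, dotProduct, Finset.mul_sum, mul_assoc]

theorem vecMulVec_add_left' (u u' v : Fin n → ℂ) :
    vecMulVec (u + u') v = vecMulVec u v + vecMulVec u' v := by
  ext i j; simp [vecMulVec_apply]; ring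

theorem vecMulVec_neg_right' (u v : Fin n → ℂ) :
    vecMulVec u (-v) = -vecMulVec u v := by
  ext i j; simp [vecMulVec_apply]

theorem vecMul_vecMulVec' (u v w : Fin n → ℂ) : v ᵥ* vecMulVec u w = (v ⬝ᵥ u) • w := by
  ext j; simp [vecMul, vecMulVec_apply, dotProduct, Finset.sum_mul, mul_assoc]

theorem rel1 (h : G * G' = 1) :
    Ablk G * Ablk G' + vecMulVec (bcol G) (crow G') = 1 := by
  ext i j
  have := congrFun (congrFun h (Sum.inl i)) (Sum.inl j)
  simp only [mul_apply, Fintype.sum_sum_type, Finset.univ_unique, Finset.sum_singleton] at this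
  simpa [mul_apply, vecMulVec_apply, Ablk, bcol, crow, toBlocks₁₁, Matrix.one_apply] using this

theorem rel2 (h : G * G' = 1) :
    crow G ᵥ* Ablk G' + dent G • crow G' = 0 := by
  ext j
  have := congrFun (congrFun h (Sum.inr ())) (Sum.inl j)
  simp only [mul_apply, Fintype.sum_sum_type, Finset.univ_unique, Finset.sum_singleton] at this
  simpa [vecMul, dotProduct, Ablk, crow, dent, toBlocks₁₁, Matrix.one_apply] using this

theorem cvA' (h : G * G' = 1) : crow G ᵥ* Ablk G' = -(dent G • crow G') := by
  have := rel2 h; linear_combination (norm := module) this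

theorem blockP (h : G * G' = 1) (hden : den G z ≠ 0) :
    (Ablk G - vecMulVec (mact G z) (crow G)) * (Ablk G' - vecMulVec z (crow G')) = 1 := by
  have h1 := rel1 h
  have h2 := cvA' h
  rw [sub_mul, mul_sub, mul_sub, mul_vecMulVec', vecMulVec_mul', vecMulVec_mul',
    vecMul_vecMulVec', h2]
  have hw : den G z • mact G z = Ablk G *ᵥ z + bcol G := by
    rw [mact, smul_smul, mul_inv_cancel₀ hden, one_smul]
  have key : vecMulVec (mact G z) (-(dent G • crow G'))
      - vecMulVec (mact G z) ((crow G ⬝ᵥ z) • crow G')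
      = -vecMulVec (Ablk G *ᵥ z + bcol G) (crow G') := by
    rw [← hw]
    ext i j
    simp [vecMulVec_apply, den, smul_eq_mul]
    ring
  rw [sub_sub (Ablk G * Ablk G'), key, vecMulVec_add_left']
  linear_combination (norm := module) h1

theorem sclm_mul (a b : ℂ) : sclm a * sclm b = sclm (a * b) := by
  ext i j; simp [mul_apply, sclm]

theorem sclm_one : sclm 1 = 1 := by
  ext i j; simp [sclm, Matrix.one_apply, Subsingleton.elim i j]

/-- Explicit inverse of `kmat G z`, in terms of the inverse matrix `G'` of `G`. -/
def Kinv (G G' : Matrix (Fin n ⊕ Unit) (Fin n ⊕ Unit) ℂ) (z : Fin n → ℂ) :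
    Matrix (Fin n ⊕ Unit) (Fin n ⊕ Unit) ℂ :=
  fromBlocks (Ablk G' - vecMulVec z (crow G')) 0 0 (sclm (den G z)⁻¹)

theorem kmat_mul_Kinv (h : G * G' = 1) (hden : den G z ≠ 0) :
    kmat G z * Kinv G G' z = 1 := by
  rw [kmat, Kinv, fromBlocks_multiply, blockP h hden, sclm_mul, mul_inv_cancel₀ hden, sclm_one]
  simp [fromBlocks_one]

/-- The corner matrix `(0 0; 0 1)`. -/
def Ec {n : ℕ} : Matrix (Fin n ⊕ Unit) (Fin n ⊕ Unit) ℂ := fromBlocks 0 0 0 (sclm 1)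

/-- The linear map `z ↦ (z ⊗ c' 0; 0 0)`. -/
def ellLM (c' : Fin n → ℂ) : (Fin n → ℂ) →ₗ[ℂ] Matrix (Fin n ⊕ Unit) (Fin n ⊕ Unit) ℂ where
  toFun z := fromBlocks (vecMulVec z c') 0 0 0
  map_add' u v := by
    ext i j; cases i <;> cases j <;> simp [fromBlocks, vecMulVec_apply] <;> ring
  map_smul' a u := by
    ext i j; cases i <;> cases j <;> simp [fromBlocks, vecMulVec_apply] <;> ring

/-- The linear map `z ↦ c ⬝ᵥ z`. -/
def cdotLM (c : Fin n → ℂ) : (Fin n → ℂ) →ₗ[ℂ] ℂ where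
  toFun z := c ⬝ᵥ z
  map_add' u v := by simp
  map_smul' a u := by simp

theorem Kinv_decomp (G G' : Matrix (Fin n ⊕ Unit) (Fin n ⊕ Unit) ℂ) (z : Fin n → ℂ) :
    Kinv G G' z = -(ellLM (crow G') z) + fromBlocks (Ablk G') 0 0 0 + (den G z)⁻¹ • Ec := by
  ext i j
  cases i <;> cases j <;>
    simp [Kinv, ellLM, Ec, fromBlocks, sclm, vecMulVec_apply, sub_eq_neg_add]

/-- The candidate derivative of `z ↦ Kinv G G' z`. -/
def Lder (G G' : Matrix (Fin n ⊕ Unit) (Fin n ⊕ Unit) ℂ) (z : Fin n → ℂ) :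
    (Fin n → ℂ) →L[ℂ] Matrix (Fin n ⊕ Unit) (Fin n ⊕ Unit) ℂ :=
  -(ellLM (crow G')).toContinuousLinearMap +
    (((1 : ℂ →L[ℂ] ℂ).smulRight (-(den G z ^ 2)⁻¹)).comp
        (cdotLM (crow G)).toContinuousLinearMap).smulRight Ec

theorem hasFDerivAt_Kinv (hden : den G z ≠ 0) :
    HasFDerivAt (fun w => Kinv G G' w) (Lder G G' z) z := by
  have h1 : HasFDerivAt (fun w => den G w) (cdotLM (crow G)).toContinuousLinearMap z :=
    ((cdotLM (crow G)).toContinuousLinearMap.hasFDerivAt (x := z)).add_const (dent G)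
  have h2 := (hasFDerivAt_inv hden).comp z h1
  have h3 := h2.smul_const (Ec (n := n))
  have h4 := (((ellLM (crow G')).toContinuousLinearMap.hasFDerivAt (x := z)).neg).add_const
    (fromBlocks (Ablk G') 0 0 0)
  have h5 := h4.add h3
  have h6 : HasFDerivAt
      (fun w => -(ellLM (crow G')) w + fromBlocks (Ablk G') 0 0 0 + (den G w)⁻¹ • Ec)
      (Lder G G' z) z := h5
  exact h6.congr_of_eventuallyEq (Filter.Eventually.of_forall fun w => Kinv_decomp G G' w)

theorem Lder_apply (x : Fin n → ℂ) :
    Lder G G' z x = -(fromBlocks (vecMulVec x (crow G')) 0 0 0) +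
      ((crow G ⬝ᵥ x) * -(den G z ^ 2)⁻¹) • Ec := by
  simp [Lder, ellLM, cdotLM, smul_eq_mul]

theorem lie_YX (x : Fin n → ℂ) : ⁅Ymat G z, Xmat x⁆ =
    fromBlocks (-(vecMulVec x (yrow G z))) 0 0 (sclm (yrow G z ⬝ᵥ x)) := by
  rw [Ring.lie_def, Ymat, Xmat, fromBlocks_multiply, fromBlocks_multiply]
  ext i j
  cases i <;> cases j <;>
    simp [fromBlocks, rowm, colm, sclm, mul_apply, vecMulVec_apply, dotProduct]

theorem key_final (h : G * G' = 1) (hden : den G z ≠ 0) (x : Fin n → ℂ) :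
    -(fromBlocks (vecMulVec x (crow G')) 0 0 0) + ((crow G ⬝ᵥ x) * -(den G z ^ 2)⁻¹) • Ec
      = -(⁅Ymat G z, Xmat x⁆ * Kinv G G' z) := by
  have hy : yrow G z ᵥ* (Ablk G' - vecMulVec z (crow G')) = -crow G' := by
    rw [yrow, smul_vecMul, vecMul_sub, cvA' h, vecMul_vecMulVec']
    ext j
    have hden' := hden
    simp only [Pi.smul_apply, Pi.sub_apply, Pi.neg_apply, smul_eq_mul, den] at hden' ⊢
    field_simp
    ring
  have hyx : yrow G z ⬝ᵥ x = (den G z)⁻¹ * (crow G ⬝ᵥ x) := by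
    rw [yrow, smul_dotProduct, smul_eq_mul]
  rw [lie_YX, Kinv, fromBlocks_multiply, neg_mul, vecMulVec_mul', hy, vecMulVec_neg_right',
    neg_neg]
  ext i j
  rcases i with i | i <;> rcases j with j | j
  · simp [fromBlocks, Ec, sclm, vecMulVec_apply]
  · simp [fromBlocks, Ec, sclm, vecMulVec_apply]
  · simp [fromBlocks, Ec, sclm, vecMulVec_apply]
  · simp only [Matrix.add_apply, Matrix.neg_apply, Matrix.smul_apply, fromBlocks_apply₂₂,
      sclm_mul, hyx, smul_eq_mul, Matrix.zero_apply, neg_zero, zero_add]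
    simp only [Ec, fromBlocks_apply₂₂, sclm, of_apply]
    simp only [Matrix.zero_mul, Matrix.zero_apply, sub_zero]
    ring

end Aux

/-- `k(g,z)` is invertible, `z ↦ k(g,z)⁻¹` is holomorphic on `{z | c·z + d ≠ 0}`,
and its derivative at `z` in direction `x` is `-⁅Y(g,z), X⁆ * k(g,z)⁻¹`. -/
theorem kmat_inv_hasFDerivAt (n : ℕ) (hn : 1 ≤ n) (g : GL (Fin n ⊕ Unit) ℂ) :
    (∀ z : Fin n → ℂ, den (g : Matrix (Fin n ⊕ Unit) (Fin n ⊕ Unit) ℂ) z ≠ 0 →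
      IsUnit (kmat (g : Matrix (Fin n ⊕ Unit) (Fin n ⊕ Unit) ℂ) z)) ∧
    DifferentiableOn ℂ (fun z => (kmat (g : Matrix (Fin n ⊕ Unit) (Fin n ⊕ Unit) ℂ) z)⁻¹)
        {z : Fin n → ℂ | den (g : Matrix (Fin n ⊕ Unit) (Fin n ⊕ Unit) ℂ) z ≠ 0} ∧
    (∀ z : Fin n → ℂ, den (g : Matrix (Fin n ⊕ Unit) (Fin n ⊕ Unit) ℂ) z ≠ 0 →
      ∃ L : (Fin n → ℂ) →L[ℂ] Matrix (Fin n ⊕ Unit) (Fin n ⊕ Unit) ℂ,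
        HasFDerivAt (fun z => (kmat (g : Matrix (Fin n ⊕ Unit) (Fin n ⊕ Unit) ℂ) z)⁻¹) L z ∧
          ∀ x : Fin n → ℂ,
            L x = -(⁅Ymat (g : Matrix (Fin n ⊕ Unit) (Fin n ⊕ Unit) ℂ) z, Xmat x⁆ *
                (kmat (g : Matrix (Fin n ⊕ Unit) (Fin n ⊕ Unit) ℂ) z)⁻¹)) := by
  set G : Matrix (Fin n ⊕ Unit) (Fin n ⊕ Unit) ℂ := (g : Matrix (Fin n ⊕ Unit) (Fin n ⊕ Unit) ℂ)
    with hG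
  set G' : Matrix (Fin n ⊕ Unit) (Fin n ⊕ Unit) ℂ :=
    ((g⁻¹ : GL (Fin n ⊕ Unit) ℂ) : Matrix (Fin n ⊕ Unit) (Fin n ⊕ Unit) ℂ) with hG'
  have hGG' : G * G' = 1 := g.mul_inv
  have hInvEq : ∀ z : Fin n → ℂ, den G z ≠ 0 → (kmat G z)⁻¹ = Kinv G G' z := fun z hz =>
    inv_eq_right_inv (kmat_mul_Kinv hGG' hz)
  have hOpen : IsOpen {z : Fin n → ℂ | den G z ≠ 0} := by
    have hc : Continuous (den G) :=
      (cdotLM (crow G)).toContinuousLinearMap.continuous.add continuous_const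
    exact isOpen_compl_singleton.preimage hc
  have hHasAt : ∀ z : Fin n → ℂ, den G z ≠ 0 →
      HasFDerivAt (fun w => (kmat G w)⁻¹) (Lder G G' z) z := by
    intro z hz
    refine (hasFDerivAt_Kinv hz).congr_of_eventuallyEq ?_
    filter_upwards [hOpen.mem_nhds hz] with w hw
    exact hInvEq w hw
  refine ⟨fun z hz => @isUnit_of_invertible _ _ _ (invertibleOfRightInverse _ _ (kmat_mul_Kinv hGG' hz)), ?_, ?_⟩
  · exact fun z hz => ((hHasAt z hz).differentiableAt).differentiableWithinAt
  · intro z hz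
    refine ⟨Lder G G' z, hHasAt z hz, fun x => ?_⟩
    rw [hInvEq z hz]
    exact (Lder_apply x).trans (key_final hGG' hz x)
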